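/- Let $B'$ be a metric space with metric $d'$ and define on equivalence classes $[x,s,t] \in (B' \times \mathbb{R} \times \mathbb{R})/\sim$ (with $(x,s,t)\sim(x',s',t')$ iff $x=x'$, $s-s'=t'-t \in n\mathbb{Z}$) the function $d([x,s,t],[x',s',t']) = \sqrt{d'(x,x')^2 + (s-s')^2 + (t-t')^2}$ computed on the unique representatives with third coordinate in $[0,n)$. Then $d$ is a well-defined metric on the quotient. -/

import Mathlib

noncomputable def v3 (a b c : ℝ) : EuclideanSpace ℝ (Fin 3) :=
  (WithLp.equiv 2 (Fin 3 → ℝ)).symm ![a, b, c]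

lemma sqrt3_norm (a b c : ℝ) :
    Real.sqrt (a ^ 2 + b ^ 2 + c ^ 2) = ‖v3 a b c‖ := by
  rw [EuclideanSpace.norm_eq]
  congr 1
  simp [v3, Fin.sum_univ_three, sq_abs]

lemma sqrt3_tri (a1 a2 b1 b2 c1 c2 : ℝ) :
    Real.sqrt ((a1 + a2) ^ 2 + (b1 + b2) ^ 2 + (c1 + c2) ^ 2) ≤
      Real.sqrt (a1 ^ 2 + b1 ^ 2 + c1 ^ 2) + Real.sqrt (a2 ^ 2 + b2 ^ 2 + c2 ^ 2) := by
  rw [sqrt3_norm, sqrt3_norm, sqrt3_norm]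
  calc ‖v3 (a1 + a2) (b1 + b2) (c1 + c2)‖
      = ‖v3 a1 b1 c1 + v3 a2 b2 c2‖ := by
        congr 1
        ext i
        fin_cases i <;> simp [v3]
    _ ≤ _ := norm_add_le _ _

/-- On the quotient `(B' × ℝ × ℝ)/∼` (with `(x,s,t) ∼ (x',s',t')` iff
`x = x'`, `s - s' = t' - t ∈ nℤ`), the function
`d([x,s,t],[x',s',t']) = √(d'(x,x')² + (s-s')² + (t-t')²)`, computed on the unique
representatives with third coordinate in `[0,n)`, is a well-defined metric.  We state
this on the set of canonical representatives: equivalent canonical representatives are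
equal (well-definedness), and `d` satisfies the metric axioms there. -/
theorem stmt8 {B' : Type*} [MetricSpace B'] (n : ℕ) (hn : 1 ≤ n) :
    (∀ p q : {p : B' × ℝ × ℝ // p.2.2 ∈ Set.Ico (0 : ℝ) n},
      (p.1.1 = q.1.1 ∧ ∃ r : ℤ, p.1.2.1 - q.1.2.1 = n * r ∧ q.1.2.2 - p.1.2.2 = n * r) →
      p = q) ∧
    (∀ p : {p : B' × ℝ × ℝ // p.2.2 ∈ Set.Ico (0 : ℝ) n},
      Real.sqrt (dist p.1.1 p.1.1 ^ 2 + (p.1.2.1 - p.1.2.1) ^ 2 +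
        (p.1.2.2 - p.1.2.2) ^ 2) = 0) ∧
    (∀ p q : {p : B' × ℝ × ℝ // p.2.2 ∈ Set.Ico (0 : ℝ) n},
      Real.sqrt (dist p.1.1 q.1.1 ^ 2 + (p.1.2.1 - q.1.2.1) ^ 2 + (p.1.2.2 - q.1.2.2) ^ 2) =
      Real.sqrt (dist q.1.1 p.1.1 ^ 2 + (q.1.2.1 - p.1.2.1) ^ 2 + (q.1.2.2 - p.1.2.2) ^ 2)) ∧
    (∀ p q : {p : B' × ℝ × ℝ // p.2.2 ∈ Set.Ico (0 : ℝ) n},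
      Real.sqrt (dist p.1.1 q.1.1 ^ 2 + (p.1.2.1 - q.1.2.1) ^ 2 + (p.1.2.2 - q.1.2.2) ^ 2)
        = 0 → p = q) ∧
    (∀ p q r : {p : B' × ℝ × ℝ // p.2.2 ∈ Set.Ico (0 : ℝ) n},
      Real.sqrt (dist p.1.1 r.1.1 ^ 2 + (p.1.2.1 - r.1.2.1) ^ 2 + (p.1.2.2 - r.1.2.2) ^ 2) ≤
      Real.sqrt (dist p.1.1 q.1.1 ^ 2 + (p.1.2.1 - q.1.2.1) ^ 2 + (p.1.2.2 - q.1.2.2) ^ 2) +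
      Real.sqrt (dist q.1.1 r.1.1 ^ 2 + (q.1.2.1 - r.1.2.1) ^ 2 + (q.1.2.2 - r.1.2.2) ^ 2)) := by
  have hn0 : (0 : ℝ) < n := by exact_mod_cast hn
  refine ⟨?_, ?_, ?_, ?_, ?_⟩
  · rintro ⟨⟨x, s, t⟩, ht⟩ ⟨⟨x', s', t'⟩, ht'⟩ ⟨hx, r, hs, htt⟩
    simp only at hx hs htt ht ht' ⊢
    have hr : r = 0 := by
      rcases ht with ⟨h1, h2⟩; rcases ht' with ⟨h1', h2'⟩
      by_contra hr
      rcases lt_or_gt_of_ne hr with h | h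
      · have : (r : ℝ) ≤ -1 := by exact_mod_cast Int.le_sub_one_of_lt h
        nlinarith
      · have : (1 : ℝ) ≤ r := by exact_mod_cast h
        nlinarith
    subst hr
    simp only [Int.cast_zero, mul_zero, sub_eq_zero] at hs htt
    ext <;> simp [hx, hs, htt.symm]
  · intro p; simp
  · intro p q
    rw [dist_comm]
    ring_nf
  · rintro ⟨⟨x, s, t⟩, ht⟩ ⟨⟨x', s', t'⟩, ht'⟩ h
    simp only at h ⊢
    have hsum : dist x x' ^ 2 + (s - s') ^ 2 + (t - t') ^ 2 = 0 := by
      have hnn : 0 ≤ dist x x' ^ 2 + (s - s') ^ 2 + (t - t') ^ 2 := by positivity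
      nlinarith [Real.sq_sqrt hnn, Real.sqrt_nonneg (dist x x' ^ 2 + (s - s') ^ 2 + (t - t') ^ 2)]
    have h1 : dist x x' = 0 := by nlinarith [dist_nonneg (x := x) (y := x'), sq_nonneg (s - s'), sq_nonneg (t - t'), sq_nonneg (dist x x')]
    have h2 : s = s' := by nlinarith [sq_nonneg (t - t'), sq_nonneg (dist x x')]
    have h3 : t = t' := by nlinarith [sq_nonneg (s - s'), sq_nonneg (dist x x')]
    ext <;> simp [dist_eq_zero.mp h1, h2, h3]
  · intro p q r
    have htri :
        Real.sqrt (dist p.1.1 r.1.1 ^ 2 + (p.1.2.1 - r.1.2.1) ^ 2 + (p.1.2.2 - r.1.2.2) ^ 2) ≤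
        Real.sqrt ((dist p.1.1 q.1.1 + dist q.1.1 r.1.1) ^ 2 +
          ((p.1.2.1 - q.1.2.1) + (q.1.2.1 - r.1.2.1)) ^ 2 +
          ((p.1.2.2 - q.1.2.2) + (q.1.2.2 - r.1.2.2)) ^ 2) := by
      apply Real.sqrt_le_sqrt
      have := dist_triangle p.1.1 q.1.1 r.1.1
      have h2 : dist p.1.1 r.1.1 ^ 2 ≤ (dist p.1.1 q.1.1 + dist q.1.1 r.1.1) ^ 2 := by
        apply pow_le_pow_left₀ dist_nonneg this
      have e1 : (p.1.2.1 - q.1.2.1) + (q.1.2.1 - r.1.2.1) = p.1.2.1 - r.1.2.1 := by ring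
      have e2 : (p.1.2.2 - q.1.2.2) + (q.1.2.2 - r.1.2.2) = p.1.2.2 - r.1.2.2 := by ring
      rw [e1, e2]
      linarith
    exact htri.trans (sqrt3_tri _ _ _ _ _ _)
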